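/- Let C be an η-constacyclic code over F_q of length n with minimum Hamming distance d_H satisfying 2 ≤ d_H < n and dimension k. Then the minimum symbol-pair distance of C is at least d_H + 2 if and only if C is not an MDS code in the Hamming metric, i.e., if and only if k < n - d_H + 1. -/

import Mathlib

/-- Hamming weight of a vector. -/
def hammingWt {F : Type*} [Zero F] [DecidableEq F] {n : ℕ} (x : Fin n → F) : ℕ :=
  (Finset.univ.filter fun i => x i ≠ 0).card

/-- Symbol-pair weight of a vector (indices mod n). -/
def pairWt {F : Type*} [Zero F] [DecidableEq F] {n : ℕ} [NeZero n] (x : Fin n → F) : ℕ :=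
  (Finset.univ.filter fun i : Fin n => ¬(x i = 0 ∧ x (i + 1) = 0)).card

/-- The η-constacyclic shift on `F^n`. -/
def constaShift {F : Type*} [Field F] {n : ℕ} [NeZero n] (η : F) (c : Fin n → F) :
    Fin n → F :=
  fun i => (if i = 0 then η else 1) * c (i - 1)

open Fin.NatCast Fin.CommRing

lemma card_filter_val_lt {n m : ℕ} (h : m ≤ n) :
    (Finset.univ.filter (fun i : Fin n => i.1 < m)).card = m := by
  have he : (Finset.univ.filter (fun i : Fin n => i.1 < m)) =
      Finset.map (Fin.castLEEmb h) Finset.univ := by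
    ext i
    simp only [Finset.mem_filter, Finset.mem_univ, true_and, Finset.mem_map]
    constructor
    · intro hi; exact ⟨⟨i.1, hi⟩, by ext; simp⟩
    · rintro ⟨j, rfl⟩; simpa using j.2
  rw [he, Finset.card_map, Finset.card_univ, Fintype.card_fin]

section
variable {F : Type*} [Field F] [DecidableEq F] {n : ℕ} [NeZero n] {η : F}

lemma iter_zero_iff (hη : η ≠ 0) (t : ℕ) (c : Fin n → F) (i : Fin n) :
    (constaShift η)^[t] c i = 0 ↔ c (i - (t : Fin n)) = 0 := by
  induction t generalizing c with
  | zero => simp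
  | succ t ih =>
    rw [Function.iterate_succ_apply, ih]
    have h1 : constaShift η c (i - (t:Fin n)) = 0 ↔ c (i - (t:Fin n) - 1) = 0 := by
      unfold constaShift
      rcases eq_or_ne (i - (t:Fin n)) 0 with h | h <;> simp [h, hη]
    rw [h1]
    have : i - ((t:ℕ)+1 : ℕ) = i - (t:Fin n) - 1 := by push_cast; ring
    rw [this]

lemma iter_mem (Code : Submodule F (Fin n → F))
    (hshift : ∀ c ∈ Code, constaShift η c ∈ Code) (t : ℕ) {c : Fin n → F} (hc : c ∈ Code) :
    (constaShift η)^[t] c ∈ Code := by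
  induction t generalizing c with
  | zero => simpa
  | succ t ih => rw [Function.iterate_succ_apply]; exact ih (hshift c hc)

lemma hammingWt_iter (hη : η ≠ 0) (t : ℕ) (c : Fin n → F) :
    hammingWt ((constaShift η)^[t] c) = hammingWt c := by
  unfold hammingWt
  apply Finset.card_bij' (fun i _ => i - (t : Fin n)) (fun i _ => i + (t : Fin n))
  · intro a ha
    simp only [Finset.mem_filter, Finset.mem_univ, true_and] at ha ⊢
    rw [Ne, iter_zero_iff hη] at ha; exact ha
  · intro a ha
    simp only [Finset.mem_filter, Finset.mem_univ, true_and] at ha ⊢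
    rw [Ne, iter_zero_iff hη]; simpa using ha
  · intro a _; simp
  · intro a _; simp

end

section
variable {F : Type*} [Field F] [DecidableEq F] {n : ℕ} [NeZero n]

lemma exists_low (Code : Submodule F (Fin n → F)) (d k : ℕ) (h2 : 2 ≤ d) (hdn : d < n)
    (hd : IsLeast {w : ℕ | ∃ c ∈ Code, c ≠ 0 ∧ hammingWt c = w} d)
    (hk : Module.finrank F Code = k) (hK : n - d + 1 ≤ k) :
    ∃ c ∈ Code, c ≠ 0 ∧ pairWt c = d + 1 := by
  have hn3 : 3 ≤ n := by omega
  set f : (Fin n → F) →ₗ[F] (Fin (n-d) → F) :=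
    LinearMap.funLeft F F (fun j : Fin (n-d) => (⟨d + j.1, by omega⟩ : Fin n)) with hf
  have hnotinj : ¬ Function.Injective (f.comp Code.subtype) := by
    intro hinj
    have h1 := LinearMap.finrank_le_finrank_of_injective hinj
    rw [hk, Module.finrank_pi, Fintype.card_fin] at h1
    omega
  obtain ⟨x, hxker, hxne⟩ : ∃ x ∈ LinearMap.ker (f.comp Code.subtype), x ≠ 0 := by
    by_contra hcon; push_neg at hcon
    exact hnotinj (LinearMap.ker_eq_bot.mp ((Submodule.eq_bot_iff _).mpr hcon))
  set c : Fin n → F := (x : Fin n → F) with hcdef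
  have hcC : c ∈ Code := x.2
  have hcne : c ≠ 0 := fun h => hxne (Subtype.ext h)
  have hfc : f c = 0 := hxker
  have hc0 : ∀ i : Fin n, d ≤ i.1 → c i = 0 := by
    intro i hi
    have hj := congrFun hfc ⟨i.1 - d, by omega⟩
    have : (⟨d + (i.1 - d), by omega⟩ : Fin n) = i := Fin.ext (by simp; omega)
    simpa [hf, LinearMap.funLeft, this] using hj
  have hge : d ≤ hammingWt c := hd.2 ⟨c, hcC, hcne, rfl⟩
  have hcard := card_filter_val_lt (n := n) (m := d) (le_of_lt hdn)
  have hsub : Finset.univ.filter (fun i => c i ≠ 0) ⊆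
      Finset.univ.filter (fun i : Fin n => i.1 < d) := by
    intro i hi
    simp only [Finset.mem_filter, Finset.mem_univ, true_and] at hi ⊢
    by_contra hlt
    exact hi (hc0 i (le_of_not_gt hlt))
  have heq := Finset.eq_of_subset_of_card_le hsub (by rw [hcard]; exact hge)
  have hiff : ∀ i : Fin n, c i = 0 ↔ ¬ i.1 < d := by
    intro i
    have := Finset.ext_iff.mp heq i
    simp only [Finset.mem_filter, Finset.mem_univ, true_and] at this
    constructor
    · intro h hlt; exact (this.mpr hlt) h
    · intro h; by_contra hne; exact h (this.mp hne)
  have hone : (1 : Fin n).1 = 1 := by rw [Fin.val_one', Nat.mod_eq_of_lt (by omega)]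
  refine ⟨c, hcC, hcne, ?_⟩
  unfold pairWt
  have hset : Finset.univ.filter (fun i : Fin n => ¬(c i = 0 ∧ c (i+1) = 0)) =
      insert (⟨n-1, by omega⟩ : Fin n) (Finset.univ.filter (fun i : Fin n => i.1 < d)) := by
    ext i
    simp only [Finset.mem_filter, Finset.mem_univ, true_and, Finset.mem_insert]
    have hv1 : ((i+1 : Fin n)).1 = (i.1 + 1) % n := by rw [Fin.add_def, hone]
    rcases eq_or_ne i.1 (n-1) with h | h
    · have hv0 : ((i+1 : Fin n)).1 = 0 := by
        rw [hv1, h]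
        have : n-1+1 = n := by omega
        rw [this, Nat.mod_self]
      have hc1 : c (i+1) ≠ 0 := by
        intro hz
        have := (hiff (i+1)).mp hz
        omega
      exact ⟨fun _ => Or.inl (Fin.ext (by simpa using h)), fun _ hand => hc1 hand.2⟩
    · have hv1' : ((i+1 : Fin n)).1 = i.1 + 1 := by
        rw [hv1, Nat.mod_eq_of_lt (by omega)]
      have hne' : i ≠ ⟨n-1, by omega⟩ := fun he => h (by rw [he])
      constructor
      · intro hcond
        right
        by_contra hlt
        exact hcond ⟨(hiff i).mpr hlt, (hiff (i+1)).mpr (by omega)⟩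
      · rintro (h' | h') hand
        · exact hne' h'
        · exact (hiff i).mp hand.1 h'
  rw [hset, Finset.card_insert_of_notMem (by simp; omega), hcard]
end

section
variable {F : Type*} [Field F] [DecidableEq F] {n : ℕ} [NeZero n]

set_option maxHeartbeats 2000000 in
lemma rank_ge (η : F) (hη : η ≠ 0) (Code : Submodule F (Fin n → F))
    (hshift : ∀ c ∈ Code, constaShift η c ∈ Code)
    (d : ℕ) (h2 : 2 ≤ d) (hdn : d < n)
    (hd : IsLeast {w : ℕ | ∃ c ∈ Code, c ≠ 0 ∧ hammingWt c = w} d)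
    (c : Fin n → F) (hcC : c ∈ Code) (hcne : c ≠ 0) (hp : pairWt c ≤ d + 1) :
    n - d + 1 ≤ Module.finrank F Code := by
  classical
  have hn3 : 3 ≤ n := by omega
  have hone : (1 : Fin n).1 = 1 := by rw [Fin.val_one', Nat.mod_eq_of_lt (by omega)]
  set A := Finset.univ.filter (fun i => c i ≠ 0) with hA
  set B := Finset.univ.filter (fun i : Fin n => c i = 0 ∧ c (i+1) ≠ 0) with hB
  have hsplit : pairWt c = A.card + B.card := by
    unfold pairWt
    rw [← Finset.card_union_of_disjoint]
    · congr 1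
      ext i
      simp only [hA, hB, Finset.mem_union, Finset.mem_filter, Finset.mem_univ, true_and]
      tauto
    · rw [Finset.disjoint_left]
      intro i hi hj
      simp only [hA, hB, Finset.mem_filter, Finset.mem_univ, true_and] at hi hj
      exact hi hj.1
  have hwA : hammingWt c = A.card := rfl
  have hge : d ≤ hammingWt c := hd.2 ⟨c, hcC, hcne, rfl⟩
  have hwle : hammingWt c ≤ n := by
    unfold hammingWt
    simpa using Finset.card_filter_le Finset.univ (fun i => c i ≠ 0)
  rcases eq_or_lt_of_le hwle with hwn | hwn
  · -- full weight case: n = d + 1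
    have hAu : A = Finset.univ := Finset.eq_univ_of_card A (by rw [← hwA, hwn, Fintype.card_fin] )
    have hall : ∀ i, c i ≠ 0 := by
      intro i
      have : i ∈ A := hAu ▸ Finset.mem_univ i
      simpa [hA] using this
    have hpc : n ≤ pairWt c := by
      rw [hsplit, ← hwA, hwn]; omega
    have hnd : n = d + 1 := by omega
    obtain ⟨c', hc'C, hc'ne, hc'wt⟩ := hd.1
    obtain ⟨i0, hi0⟩ : ∃ i0, c' i0 = 0 := by
      by_contra hcon; push_neg at hcon
      have : hammingWt c' = n := by
        unfold hammingWt
        rw [Finset.filter_true_of_mem (fun i _ => hcon i), Finset.card_univ, Fintype.card_fin]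
      omega
    have hli : LinearIndependent F ![(⟨c', hc'C⟩ : Code), ⟨c, hcC⟩] := by
      rw [LinearIndependent.pair_iff]
      intro s t hst
      have hv : s • c' + t • c = 0 := by
        have := congrArg (Subtype.val) hst
        simpa using this
      have ht : t = 0 := by
        have h1 := congrFun hv i0
        simp only [Pi.add_apply, Pi.smul_apply, smul_eq_mul, hi0, mul_zero, zero_add,
          Pi.zero_apply] at h1
        rcases mul_eq_zero.mp h1 with h | h
        · exact h
        · exact absurd h (hall i0)
      subst ht
      refine ⟨?_, rfl⟩
      obtain ⟨j, hj⟩ : ∃ j, c' j ≠ 0 := by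
        by_contra hcon; push_neg at hcon; exact hc'ne (funext hcon)
      have h1 := congrFun hv j
      simp only [Pi.add_apply, Pi.smul_apply, smul_eq_mul, zero_smul, Pi.zero_apply,
        zero_mul, add_zero] at h1
      rcases mul_eq_zero.mp h1 with h | h
      · exact h
      · exact absurd h hj
    have h2le := hli.fintype_card_le_finrank
    simp only [Fintype.card_fin] at h2le
    omega
  · -- weight < n case
    have hBne : B.Nonempty := by
      rw [Finset.nonempty_iff_ne_empty]
      intro hBe
      have hrule : ∀ i : Fin n, c i = 0 → c (i+1) = 0 := by
        intro i hi
        by_contra hne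
        have hmem : i ∈ B := by simp [hB, hi, hne]
        rw [hBe] at hmem
        simp at hmem
      obtain ⟨a, ha⟩ : ∃ a, c a ≠ 0 := by
        by_contra hcon; push_neg at hcon; exact hcne (funext hcon)
      obtain ⟨b, hb⟩ : ∃ b, c b = 0 := by
        by_contra hcon; push_neg at hcon
        have : hammingWt c = n := by
          unfold hammingWt
          rw [Finset.filter_true_of_mem (fun i _ => hcon i), Finset.card_univ, Fintype.card_fin]
        omega
      have hzero : ∀ t : ℕ, c (b + (t : Fin n)) = 0 := by
        intro t
        induction t with
        | zero => simpa using hb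
        | succ t ih =>
          have he : b + ((t+1 : ℕ) : Fin n) = (b + (t : Fin n)) + 1 := by push_cast; rw [add_assoc]
          rw [he]
          exact hrule _ ih
      have hz := hzero ((a - b).1)
      rw [Fin.cast_val_eq_self] at hz
      have hba : b + (a - b) = a := by rw [add_comm, sub_add_cancel]
      rw [hba] at hz
      exact ha hz
    have hB1 : B.card = 1 := by
      have h1 : 1 ≤ B.card := Finset.card_pos.mpr hBne
      omega
    have hwd : hammingWt c = d := by omega
    obtain ⟨i0, hi0⟩ := Finset.card_eq_one.mp hB1
    have hBmem : ∀ i : Fin n, (c i = 0 ∧ c (i+1) ≠ 0) ↔ i = i0 := by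
      intro i
      have hmem := Finset.ext_iff.mp hi0 i
      simp only [hB, Finset.mem_filter, Finset.mem_univ, true_and, Finset.mem_singleton] at hmem
      exact hmem
    obtain ⟨g, hgC, keyg, hwg⟩ :
        ∃ g, g ∈ Code ∧ (∀ i : Fin n, g i = 0 ↔ c (i + (i0 + 1)) = 0) ∧
          hammingWt g = hammingWt c := by
      set tv : ℕ := n - 1 - i0.1 with htv
      have htv0 : (tv : Fin n) = -(i0 + 1) := by
        have h1 : ((tv + (i0.1 + 1) : ℕ) : Fin n) = 0 := by
          have he : tv + (i0.1 + 1) = n := by have := i0.2; omega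
          rw [he, Fin.natCast_self]
        push_cast [Fin.cast_val_eq_self] at h1
        exact eq_neg_of_add_eq_zero_left (by rw [← add_assoc] at h1 ⊢; exact h1)
      exact ⟨(constaShift η)^[tv] c, iter_mem Code hshift tv hcC,
        fun i => by rw [iter_zero_iff hη, htv0, sub_neg_eq_add], hammingWt_iter hη tv c⟩
    have hg0 : g 0 ≠ 0 := by
      intro h
      rw [keyg, zero_add] at h
      exact ((hBmem i0).mpr rfl).2 h
    have hglast : g ⟨n-1, by omega⟩ = 0 := by
      rw [keyg]
      have hl1 : (⟨n-1, by omega⟩ : Fin n) + 1 = 0 := by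
        apply Fin.ext
        rw [Fin.add_def, hone]
        simp only [Fin.val_zero]
        have : n - 1 + 1 = n := by omega
        rw [this, Nat.mod_self]
      have he : (⟨n-1, by omega⟩ : Fin n) + (i0 + 1) = i0 := by
        calc (⟨n-1, by omega⟩ : Fin n) + (i0 + 1) = (⟨n-1, by omega⟩ + 1) + i0 := by rw [← add_assoc, add_right_comm]
        _ = 0 + i0 := by rw [hl1]
        _ = i0 := zero_add _
      rw [he]
      exact ((hBmem i0).mpr rfl).1
    have hstep : ∀ a : ℕ, (h : a + 1 < n) → g ⟨a, by omega⟩ = 0 → g ⟨a+1, h⟩ = 0 := by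
      intro a h ha
      by_contra hne
      have heq1 : (⟨a+1, h⟩ : Fin n) = (⟨a, by omega⟩ : Fin n) + 1 := by
        apply Fin.ext
        rw [Fin.add_def, hone]
        exact (Nat.mod_eq_of_lt h).symm
      have hc1 : c ((⟨a, by omega⟩ : Fin n) + (i0 + 1)) = 0 := (keyg _).mp ha
      have hc2 : c ((⟨a, by omega⟩ : Fin n) + (i0 + 1) + 1) ≠ 0 := by
        intro hzz
        apply hne
        rw [keyg, heq1]
        calc c ((⟨a, by omega⟩ : Fin n) + 1 + (i0 + 1))
            = c ((⟨a, by omega⟩ : Fin n) + (i0 + 1) + 1) := by rw [add_right_comm]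
        _ = 0 := hzz
      have hii := (hBmem _).mp ⟨hc1, hc2⟩
      have h10 : (⟨a, by omega⟩ : Fin n) + 1 = 0 := by
        have h11 : ((⟨a, by omega⟩ : Fin n) + 1) + i0 = 0 + i0 := by
          rw [zero_add]
          calc (⟨a, by omega⟩ : Fin n) + 1 + i0 = (⟨a, by omega⟩ : Fin n) + (i0 + 1) := by rw [add_right_comm, add_assoc]
          _ = i0 := hii
        exact add_right_cancel h11
      have h12 := congrArg Fin.val h10
      rw [Fin.add_def, hone] at h12
      simp only [Fin.val_zero] at h12
      rw [Nat.mod_eq_of_lt h] at h12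
      omega
    set q : ℕ → Prop := fun a => a < n ∧ g ⟨a % n, Nat.mod_lt a (by omega)⟩ = 0 with hq
    have hex : ∃ a, q a := by
      refine ⟨n-1, by omega, ?_⟩
      have he : (⟨(n-1) % n, Nat.mod_lt _ (by omega)⟩ : Fin n) = ⟨n-1, by omega⟩ :=
        Fin.ext (Nat.mod_eq_of_lt (by omega))
      rw [he]
      exact hglast
    set m := Nat.find hex with hm
    have hqm : q m := Nat.find_spec hex
    have hmn : m < n := hqm.1
    have hgm : g ⟨m, hmn⟩ = 0 := by
      have h1 := hqm.2
      rwa [show (⟨m % n, Nat.mod_lt _ (by omega)⟩ : Fin n) = ⟨m, hmn⟩ from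
        Fin.ext (Nat.mod_eq_of_lt hmn)] at h1
    have hlow : ∀ a : ℕ, a < m → ∀ (h : a < n), g ⟨a, h⟩ ≠ 0 := by
      intro a ham h hz
      apply Nat.find_min hex ham
      refine ⟨h, ?_⟩
      rwa [show (⟨a % n, Nat.mod_lt _ (by omega)⟩ : Fin n) = ⟨a, h⟩ from
        Fin.ext (Nat.mod_eq_of_lt h)]
    have hm0 : 0 < m := by
      rcases Nat.eq_zero_or_pos m with h | h
      · exfalso
        apply hg0
        have he0 : (⟨m, hmn⟩ : Fin n) = 0 := Fin.ext (by simp [h])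
        rwa [he0] at hgm
      · exact h
    have hhigh : ∀ a : ℕ, m ≤ a → ∀ (h : a < n), g ⟨a, h⟩ = 0 := by
      intro a ham
      induction a, ham using Nat.le_induction with
      | base => intro h; exact hgm
      | succ a ham ih => intro h; exact hstep a h (ih (by omega))
    have hsupp : ∀ i : Fin n, g i ≠ 0 ↔ i.1 < m := by
      intro i
      constructor
      · intro h
        by_contra hlt
        exact h (hhigh i.1 (le_of_not_gt hlt) i.2)
      · intro h hz
        exact hlow i.1 h i.2 hz
    have hwgm : hammingWt g = m := by
      unfold hammingWt
      rw [show Finset.univ.filter (fun i => g i ≠ 0) =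
          Finset.univ.filter (fun i : Fin n => i.1 < m) from by
        ext i
        simp only [Finset.mem_filter, Finset.mem_univ, true_and]
        exact hsupp i]
      exact card_filter_val_lt (le_of_lt hmn)
    have hmd : m = d := by omega
    set N := n - d + 1 with hN
    have hidx : ∀ i : Fin N, i.1 + d - 1 < n := fun i => by have := i.2; omega
    obtain ⟨v, hvmem, hvz0⟩ : ∃ v : Fin N → (Fin n → F), (∀ j, v j ∈ Code) ∧
        ∀ (j : Fin N) (i : Fin n), v j i = 0 ↔ g (i - ((j.1 : ℕ) : Fin n)) = 0 :=
      ⟨fun j => (constaShift η)^[j.1] g, fun j => iter_mem Code hshift _ hgC,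
        fun j i => iter_zero_iff hη _ g i⟩
    have hvz : ∀ (j : Fin N) (i : Fin n), v j i ≠ 0 ↔ (i - ((j.1 : ℕ) : Fin n)).1 < d := by
      intro j i
      have h1 := hsupp (i - ((j.1 : ℕ) : Fin n))
      rw [hmd] at h1
      rw [ne_eq, hvz0 j i]
      exact h1
    have hvalsub : ∀ (a b : ℕ) (ha : a < n), b ≤ a →
        ((⟨a, ha⟩ : Fin n) - ((b : ℕ) : Fin n)).1 = a - b := by
      intro a b ha hba
      have hb : (((b : ℕ) : Fin n)).1 = b := by
        rw [Fin.val_natCast]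
        exact Nat.mod_eq_of_lt (by omega)
      rw [Fin.sub_def]
      simp only [hb]
      show ((n - b) + a) % n = a - b
      have he : (n - b) + a = (a - b) + n := by omega
      rw [he, Nat.add_mod_right]
      exact Nat.mod_eq_of_lt (by omega)
    set M : Matrix (Fin N) (Fin N) F := fun j i => v j ⟨i.1 + d - 1, hidx i⟩ with hM
    have htri : Matrix.BlockTriangular M OrderDual.toDual := by
      intro i j hij
      have hij'' : i.1 < j.1 := hij
      by_contra hne
      have hlt := (hvz i ⟨j.1 + d - 1, hidx j⟩).mp hne
      rw [hvalsub _ _ _ (by omega)] at hlt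
      omega
    have hdiag : ∀ j, M j j ≠ 0 := by
      intro j
      show v j ⟨j.1 + d - 1, hidx j⟩ ≠ 0
      rw [hvz, hvalsub _ _ _ (by omega)]
      omega
    have hdet : M.det ≠ 0 := by
      rw [Matrix.det_of_lowerTriangular M htri]
      exact Finset.prod_ne_zero_iff.mpr (fun j _ => hdiag j)
    have hunit : IsUnit M := (Matrix.isUnit_iff_isUnit_det M).mpr (Ne.isUnit hdet)
    have hrows : LinearIndependent F (fun j => M j) :=
      Matrix.linearIndependent_rows_iff_isUnit.mpr hunit
    set P : (Fin n → F) →ₗ[F] (Fin N → F) :=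
      LinearMap.funLeft F F (fun i : Fin N => (⟨i.1 + d - 1, hidx i⟩ : Fin n)) with hP
    have hvli : LinearIndependent F v := LinearIndependent.of_comp P hrows
    have hv'li : LinearIndependent F (fun j : Fin N => (⟨v j, hvmem j⟩ : Code)) :=
      LinearIndependent.of_comp Code.subtype hvli
    have hfin := hv'li.fintype_card_le_finrank
    simpa [Fintype.card_fin] using hfin
end

theorem stmt13 {F : Type*} [Field F] [DecidableEq F] {n : ℕ} [NeZero n]
    (η : F) (hη : η ≠ 0) (Code : Submodule F (Fin n → F))
    (hshift : ∀ c ∈ Code, constaShift η c ∈ Code)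
    (d k : ℕ) (h2 : 2 ≤ d) (hdn : d < n)
    (hd : IsLeast {w : ℕ | ∃ c ∈ Code, c ≠ 0 ∧ hammingWt c = w} d)
    (hk : Module.finrank F Code = k) :
    (∀ c ∈ Code, c ≠ 0 → d + 2 ≤ pairWt c) ↔ k < n - d + 1 := by
  constructor
  · intro hp
    by_contra hK
    push_neg at hK
    obtain ⟨c, hcC, hcne, hpw⟩ := exists_low Code d k h2 hdn hd hk hK
    have := hp c hcC hcne
    omega
  · intro hK c hcC hcne
    by_contra hlt
    push_neg at hlt
    have hge := rank_ge η hη Code hshift d h2 hdn hd c hcC hcne (by omega)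
    rw [hk] at hge
    omega
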